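/- arXiv:0809.2652 — 3 statements merged into one kernel-verified Lean document; each statement's English description precedes it below -/
import Mathlib

section
/- For every real number L with 0 < L < π, the infinite product ∏_{k=0}^∞ (2 + (πk/L)²)/|(πk/L)² − 1| converges and equals √2 · sinh(√2 L)/sin L. Consequently, the Kramers rate prefactor (1/2π)·√(∏_{k=0}^∞ (2+(πk/L)²)/|−1+(πk/L)²|) equals (1/(2^{3/4} π))·√(sinh(√2 L)/sin L). -/
open Real Filter Finset Topology

lemma euler_sinh (t : ℝ) :
    Tendsto (fun n : ℕ => π * t * ∏ j ∈ Finset.range n, ((1:ℝ) + t^2/((j:ℝ)+1)^2))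
      atTop (𝓝 (Real.sinh (π * t))) := by
  have h := (Complex.continuous_im.tendsto _).comp
    (Complex.tendsto_euler_sin_prod ((t:ℂ) * Complex.I))
  have hlim : (Complex.sin ((π:ℂ) * ((t:ℂ) * Complex.I))).im = Real.sinh (π * t) := by
    rw [show (π:ℂ) * ((t:ℂ) * Complex.I) = ((π*t : ℝ):ℂ) * Complex.I by push_cast; ring,
      Complex.sin_mul_I]
    simp [← Complex.ofReal_mul, Complex.sinh_ofReal_re]
  rw [← hlim]
  refine h.congr fun n => ?_
  simp only [Function.comp_apply]
  have e : ∀ j : ℕ, (1:ℂ) - ((t:ℂ)*Complex.I)^2/((j:ℂ)+1)^2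
      = (((1:ℝ) + t^2/((j:ℝ)+1)^2 : ℝ) : ℂ) := by
    intro j
    rw [mul_pow, Complex.I_sq]
    push_cast
    ring
  simp_rw [e, ← Complex.ofReal_prod]
  rw [show (π:ℂ) * ((t:ℂ)*Complex.I) * ((∏ j ∈ Finset.range n, ((1:ℝ) + t^2/((j:ℝ)+1)^2) : ℝ):ℂ)
      = ((π * t * ∏ j ∈ Finset.range n, ((1:ℝ) + t^2/((j:ℝ)+1)^2) : ℝ):ℂ) * Complex.I by
    push_cast; ring]
  rw [Complex.mul_I_im, Complex.ofReal_re]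

theorem hasProd_GL_aux (L : ℝ) (hL0 : 0 < L) (hLpi : L < π) :
    HasProd (fun k : ℕ => (2 + (π * k / L) ^ 2) / |(π * k / L) ^ 2 - 1|)
      (Real.sqrt 2 * Real.sinh (Real.sqrt 2 * L) / Real.sin L) := by
  have hπ : (0:ℝ) < π := Real.pi_pos
  have hLne : L ≠ 0 := ne_of_gt hL0
  have hπne : π ≠ 0 := ne_of_gt hπ
  set f : ℕ → ℝ := fun k => (2 + (π * k / L) ^ 2) / |(π * k / L) ^ 2 - 1| with hf
  have hsin : 0 < Real.sin L := Real.sin_pos_of_pos_of_lt_pi hL0 hLpi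
  have hj1 : ∀ j : ℕ, (1:ℝ) ≤ (j:ℝ) + 1 := by
    intro j; have := Nat.cast_nonneg (α := ℝ) j; linarith
  have hgt : ∀ j : ℕ, 1 < (π * ((j:ℝ)+1) / L) ^ 2 := by
    intro j
    have h1 : (1:ℝ) < π * ((j:ℝ)+1) / L := by
      rw [lt_div_iff₀ hL0]
      nlinarith [hj1 j]
    nlinarith
  have hBpos : ∀ j : ℕ, 0 < 1 - L^2/(π^2*((j:ℝ)+1)^2) := by
    intro j
    have h1 : L^2/(π^2*((j:ℝ)+1)^2) < 1 := by
      rw [div_lt_one (by positivity)]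
      nlinarith [hj1 j, mul_nonneg (sq_nonneg π) (Nat.cast_nonneg (α := ℝ) j),
        sq_nonneg (π * (j:ℝ))]
    linarith
  have hApos : ∀ j : ℕ, 0 < 1 + 2*L^2/(π^2*((j:ℝ)+1)^2) := by
    intro j; positivity
  have hf0 : f 0 = 2 := by
    simp [hf]
  have hf1 : ∀ j : ℕ, f (j+1) =
      (1 + 2*L^2/(π^2*((j:ℝ)+1)^2)) / (1 - L^2/(π^2*((j:ℝ)+1)^2)) := by
    intro j
    have hc := hgt j
    have hjne : ((j:ℝ)+1) ≠ 0 := by positivity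
    have habs : |(π * ((j:ℝ)+1) / L) ^ 2 - 1| = (π * ((j:ℝ)+1) / L) ^ 2 - 1 :=
      abs_of_pos (by linarith)
    simp only [hf]
    push_cast
    rw [habs, div_eq_div_iff (by linarith) (ne_of_gt (hBpos j))]
    field_simp
    ring
  have hfpos : ∀ k : ℕ, 0 < f k := by
    intro k
    cases k with
    | zero => rw [hf0]; norm_num
    | succ j => rw [hf1 j]; exact div_pos (hApos j) (hBpos j)
  have hnum : Tendsto (fun n : ℕ => Real.sqrt 2 * L *
      ∏ j ∈ Finset.range n, ((1:ℝ) + 2*L^2/(π^2*((j:ℝ)+1)^2)))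
      atTop (𝓝 (Real.sinh (Real.sqrt 2 * L))) := by
    have h := euler_sinh (Real.sqrt 2 * L / π)
    have e1 : π * (Real.sqrt 2 * L / π) = Real.sqrt 2 * L := by field_simp
    have e2 : ∀ j : ℕ, (Real.sqrt 2 * L / π)^2 / ((j:ℝ)+1)^2 = 2*L^2/(π^2*((j:ℝ)+1)^2) := by
      intro j
      rw [div_pow, mul_pow, Real.sq_sqrt (by norm_num : (0:ℝ) ≤ 2), div_div]
    simpa only [e1, e2] using h
  have hden : Tendsto (fun n : ℕ => L *
      ∏ j ∈ Finset.range n, ((1:ℝ) - L^2/(π^2*((j:ℝ)+1)^2)))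
      atTop (𝓝 (Real.sin L)) := by
    have h := Real.tendsto_euler_sin_prod (L / π)
    have e1 : π * (L / π) = L := by field_simp
    have e2 : ∀ j : ℕ, (L / π)^2 / ((j:ℝ)+1)^2 = L^2/(π^2*((j:ℝ)+1)^2) := by
      intro j
      rw [div_pow, div_div]
    simpa only [e1, e2] using h
  have hdiv := hnum.div hden (ne_of_gt hsin)
  have hTfull := hdiv.const_mul (Real.sqrt 2)
  have hkey : ∀ n : ℕ, Real.sqrt 2 *
      ((Real.sqrt 2 * L * ∏ j ∈ Finset.range n, ((1:ℝ) + 2*L^2/(π^2*((j:ℝ)+1)^2))) /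
       (L * ∏ j ∈ Finset.range n, ((1:ℝ) - L^2/(π^2*((j:ℝ)+1)^2)))) =
      ∏ k ∈ Finset.range (n+1), f k := by
    intro n
    rw [Finset.prod_range_succ', hf0]
    simp_rw [hf1]
    rw [Finset.prod_div_distrib]
    set A := ∏ j ∈ Finset.range n, ((1:ℝ) + 2*L^2/(π^2*((j:ℝ)+1)^2)) with hA
    set B := ∏ j ∈ Finset.range n, ((1:ℝ) - L^2/(π^2*((j:ℝ)+1)^2)) with hB
    have hBp : 0 < B := Finset.prod_pos fun j _ => hBpos j
    have h2 : Real.sqrt 2 * Real.sqrt 2 = 2 := Real.mul_self_sqrt (by norm_num)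
    field_simp
    linear_combination A * h2
  have hQ : Tendsto (fun n : ℕ => ∏ k ∈ Finset.range (n+1), f k) atTop
      (𝓝 (Real.sqrt 2 * (Real.sinh (Real.sqrt 2 * L) / Real.sin L))) :=
    hTfull.congr fun n => hkey n
  have hQ' : Tendsto (fun n : ℕ => ∏ k ∈ Finset.range n, f k) atTop
      (𝓝 (Real.sqrt 2 * (Real.sinh (Real.sqrt 2 * L) / Real.sin L))) :=
    (tendsto_add_atTop_iff_nat 1).mp hQ
  have hlog : Summable fun k => Real.log (f k) := by
    rw [← summable_nat_add_iff 1]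
    set C := (3*L^2/π^2) / (1 - L^2/π^2) with hC
    have hD : 0 < 1 - L^2/π^2 := by
      have := hBpos 0
      simpa using this
    have hmaj : Summable fun j : ℕ => C * (1/((j:ℝ)+1)^2) := by
      apply Summable.mul_left
      have h := summable_one_div_nat_pow.mpr (by norm_num : 1 < 2)
      have := (summable_nat_add_iff 1).mpr h
      simpa using this
    refine Summable.of_nonneg_of_le (fun j => ?_) (fun j => ?_) hmaj
    · apply Real.log_nonneg
      rw [hf1 j, le_div_iff₀ (hBpos j)]
      have hx : 0 ≤ L^2/(π^2*((j:ℝ)+1)^2) := by positivity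
      have hx2 : 2*L^2/(π^2*((j:ℝ)+1)^2) = 2*(L^2/(π^2*((j:ℝ)+1)^2)) := by ring
      linarith [hx, hx2]
    · have hB := hBpos j
      have hjne : ((j:ℝ)+1) ≠ 0 := by positivity
      have h1 : Real.log (f (j+1)) ≤ f (j+1) - 1 :=
        Real.log_le_sub_one_of_pos (hfpos (j+1))
      have heq : f (j+1) - 1 =
          3*(L^2/(π^2*((j:ℝ)+1)^2)) / (1 - L^2/(π^2*((j:ℝ)+1)^2)) := by
        rw [hf1 j, div_sub_one (ne_of_gt hB)]
        congr 1
        ring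
      have hB0 : 1 - L^2/π^2 ≤ 1 - L^2/(π^2*((j:ℝ)+1)^2) := by
        have h3 : π^2 ≤ π^2*((j:ℝ)+1)^2 := by
          nlinarith [hj1 j, mul_nonneg (sq_nonneg π) (Nat.cast_nonneg (α := ℝ) j),
            sq_nonneg (π * (j:ℝ))]
        have : L^2/(π^2*((j:ℝ)+1)^2) ≤ L^2/π^2 :=
          div_le_div_of_nonneg_left (sq_nonneg L) (by positivity) h3
        linarith
      have hsplit : L^2/(π^2*((j:ℝ)+1)^2) = L^2/π^2 * (1/((j:ℝ)+1)^2) := by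
        rw [div_mul_div_comm, mul_one]
      have e3 : 3*(L^2/(π^2*((j:ℝ)+1)^2)) / (1 - L^2/π^2) = C * (1/((j:ℝ)+1)^2) := by
        rw [hC, hsplit]
        ring
      have h2 : f (j+1) - 1 ≤ C * (1/((j:ℝ)+1)^2) := by
        rw [heq, ← e3]
        exact div_le_div_of_nonneg_left (by positivity) hD hB0
      linarith
  have hM : Multipliable f := by
    have := Real.multipliable_of_summable_log hfpos hlog
    exact this
  have htp : ∏' k, f k = Real.sqrt 2 * (Real.sinh (Real.sqrt 2 * L) / Real.sin L) :=
    tendsto_nhds_unique hM.hasProd.tendsto_prod_nat hQ'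
  have hfin := hM.hasProd
  rw [htp] at hfin
  rw [mul_div_assoc]
  exact hfin

/-- For every real `L` with `0 < L < π`, the infinite product
`∏_{k=0}^∞ (2 + (πk/L)²)/|(πk/L)² − 1|` converges and equals
`√2 · sinh(√2 L)/sin L`; consequently the Kramers rate prefactor
`(1/2π)·√(∏_{k=0}^∞ (2+(πk/L)²)/|−1+(πk/L)²|)`
equals `(1/(2^{3/4} π))·√(sinh(√2 L)/sin L)`. -/
theorem stmt_0 (L : ℝ) (hL0 : 0 < L) (hLpi : L < π) :
    HasProd (fun k : ℕ => (2 + (π * k / L) ^ 2) / |(π * k / L) ^ 2 - 1|)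
      (Real.sqrt 2 * Real.sinh (Real.sqrt 2 * L) / Real.sin L) ∧
    (1 / (2 * π)) *
        Real.sqrt (∏' k : ℕ, (2 + (π * k / L) ^ 2) / |(-1) + (π * k / L) ^ 2|) =
      (1 / (2 ^ ((3 : ℝ) / 4) * π)) *
        Real.sqrt (Real.sinh (Real.sqrt 2 * L) / Real.sin L) := by
  have hp := hasProd_GL_aux L hL0 hLpi
  refine ⟨hp, ?_⟩
  have he : (fun k : ℕ => (2 + (π * k / L) ^ 2) / |(-1) + (π * k / L) ^ 2|)
      = fun k : ℕ => (2 + (π * k / L) ^ 2) / |(π * k / L) ^ 2 - 1| := by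
    funext k
    rw [neg_add_eq_sub]
  rw [he, hp.tprod_eq, mul_div_assoc, Real.sqrt_mul (Real.sqrt_nonneg 2)]
  have h14 : Real.sqrt (Real.sqrt 2) = (2:ℝ) ^ ((1:ℝ)/4) := by
    rw [show Real.sqrt 2 = (2:ℝ) ^ ((1:ℝ)/2) from Real.sqrt_eq_rpow 2,
      Real.sqrt_eq_rpow, ← Real.rpow_mul (by norm_num : (0:ℝ) ≤ 2)]
    norm_num
  rw [h14]
  have hpow : (2:ℝ) ^ ((3:ℝ)/4) * (2:ℝ) ^ ((1:ℝ)/4) = 2 := by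
    rw [← Real.rpow_add (by norm_num : (0:ℝ) < 2)]
    norm_num
  have h34pos : (0:ℝ) < (2:ℝ) ^ ((3:ℝ)/4) := Real.rpow_pos_of_pos (by norm_num) _
  have hπ : (0:ℝ) < π := Real.pi_pos
  set s := Real.sqrt (Real.sinh (Real.sqrt 2 * L) / Real.sin L)
  field_simp
  linear_combination s * hpow
end

section
/- For every real number L with 0 < L < 2π, the infinite product whose k = 0 factor is 2 and whose factor for each k ≥ 1 is [(2 + (2πk/L)²)/((2πk/L)² − 1)]² converges and equals (sinh(L/√2)/sin(L/2))². Consequently (1/2π) times the square root of this product equals (1/2π)·sinh(L/√2)/sin(L/2). -/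
open Real Filter Topology

/-- Euler-type product for `sinh`, derived from the complex sine product. -/
private lemma euler_sinh_prod (x : ℝ) :
    Tendsto (fun n : ℕ => π * x * ∏ j ∈ Finset.range n, ((1 : ℝ) + x ^ 2 / ((j : ℝ) + 1) ^ 2))
      atTop (𝓝 (Real.sinh (π * x))) := by
  have h := (Complex.continuous_im.tendsto _).comp (Complex.tendsto_euler_sin_prod (x * Complex.I))
  have key : ∀ n : ℕ,
      ((π : ℂ) * (x * Complex.I) * ∏ j ∈ Finset.range n,
        ((1 : ℂ) - (x * Complex.I) ^ 2 / ((j : ℂ) + 1) ^ 2))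
      = ((π * x * ∏ j ∈ Finset.range n, ((1 : ℝ) + x ^ 2 / ((j : ℝ) + 1) ^ 2) : ℝ) : ℂ)
          * Complex.I := by
    intro n
    have hp : ∀ j ∈ Finset.range n, ((1 : ℂ) - (x * Complex.I) ^ 2 / ((j : ℂ) + 1) ^ 2)
        = ((1 : ℂ) + (x : ℂ) ^ 2 / ((j : ℂ) + 1) ^ 2) := by
      intro j _
      rw [mul_pow, Complex.I_sq]
      ring
    rw [Finset.prod_congr rfl hp]
    push_cast
    ring
  have hs : Complex.sin ((π : ℂ) * (x * Complex.I))
      = ((Real.sinh (π * x) : ℝ) : ℂ) * Complex.I := by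
    rw [show (π : ℂ) * (x * Complex.I) = ((π * x : ℝ) : ℂ) * Complex.I by push_cast; ring,
      Complex.sin_mul_I, Complex.ofReal_sinh]
  convert h using 2 with n
  · rw [Function.comp_apply, key n, Complex.mul_I_im, Complex.ofReal_re]
  · rw [hs, Complex.mul_I_im, Complex.ofReal_re]

set_option maxHeartbeats 1000000 in
/-- For every real `L` with `0 < L < 2π`, the infinite product whose
`k = 0` factor is `2` and whose factor for each `k ≥ 1` is
`[(2 + (2πk/L)²)/((2πk/L)² − 1)]²` converges and equals `(sinh(L/√2)/sin(L/2))²`.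
Consequently `(1/2π)` times the square root of this product equals
`(1/2π)·sinh(L/√2)/sin(L/2)`. -/
theorem stmt_1 (L : ℝ) (hL0 : 0 < L) (hL2pi : L < 2 * π) :
    HasProd
      (fun k : ℕ => if k = 0 then 2 else
        ((2 + (2 * π * k / L) ^ 2) / ((2 * π * k / L) ^ 2 - 1)) ^ 2)
      ((Real.sinh (L / Real.sqrt 2) / Real.sin (L / 2)) ^ 2) ∧
    (1 / (2 * π)) *
        Real.sqrt (∏' k : ℕ, if k = 0 then 2 else
          ((2 + (2 * π * k / L) ^ 2) / ((2 * π * k / L) ^ 2 - 1)) ^ 2) =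
      (1 / (2 * π)) * (Real.sinh (L / Real.sqrt 2) / Real.sin (L / 2)) := by
  have hπ : 0 < π := Real.pi_pos
  have hLne : L ≠ 0 := ne_of_gt hL0
  set f : ℕ → ℝ := fun k => if k = 0 then 2 else
      ((2 + (2 * π * k / L) ^ 2) / ((2 * π * k / L) ^ 2 - 1)) ^ 2 with hf
  -- basic positivity facts
  have hxgt : ∀ k : ℕ, k ≠ 0 → 1 < 2 * π * k / L := by
    intro k hk
    have hk1 : (1 : ℝ) ≤ (k : ℝ) := by exact_mod_cast Nat.one_le_iff_ne_zero.mpr hk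
    rw [lt_div_iff₀ hL0]
    nlinarith
  have hden : ∀ k : ℕ, k ≠ 0 → 0 < (2 * π * k / L) ^ 2 - 1 := by
    intro k hk
    have := hxgt k hk
    nlinarith
  have hpos : ∀ k : ℕ, 0 < f k := by
    intro k
    by_cases hk : k = 0
    · simp [hf, hk]
    · have h1 := hden k hk
      have h2 : (0:ℝ) < 2 + (2 * π * k / L) ^ 2 := by positivity
      simp only [hf, if_neg hk]
      positivity
  have hge1 : ∀ k : ℕ, k ≠ 0 →
      (1 : ℝ) ≤ (2 + (2 * π * k / L) ^ 2) / ((2 * π * k / L) ^ 2 - 1) := by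
    intro k hk
    rw [le_div_iff₀ (hden k hk)]
    nlinarith
  -- summability of the logs
  have hC : 0 < 4 * π ^ 2 - L ^ 2 := by nlinarith
  have hlogle : ∀ k : ℕ, k ≠ 0 →
      Real.log (f k) ≤ (6 * L ^ 2 / (4 * π ^ 2 - L ^ 2)) * (1 / (k : ℝ) ^ 2) := by
    intro k hk
    have hk1 : (1 : ℝ) ≤ (k : ℝ) := by exact_mod_cast Nat.one_le_iff_ne_zero.mpr hk
    have hkpos : (0 : ℝ) < (k : ℝ) ^ 2 := by positivity
    have hd := hden k hk
    set r : ℝ := (2 + (2 * π * k / L) ^ 2) / ((2 * π * k / L) ^ 2 - 1) with hr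
    have hr1 : (1 : ℝ) ≤ r := hge1 k hk
    have hfk : f k = r ^ 2 := by simp [hf, if_neg hk, hr]
    have hlog : Real.log (f k) = 2 * Real.log r := by
      rw [hfk, Real.log_pow]; norm_num
    have h1 : Real.log r ≤ r - 1 := Real.log_le_sub_one_of_pos (lt_of_lt_of_le one_pos hr1)
    have h2 : r - 1 = 3 / ((2 * π * k / L) ^ 2 - 1) := by
      rw [hr, div_sub_one (ne_of_gt hd)]
      congr 1
      ring
    have hrw : (2 * π * (k:ℝ) / L) ^ 2 - 1 = (4 * π ^ 2 * (k:ℝ) ^ 2 - L ^ 2) / L ^ 2 := by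
      field_simp
      ring
    have hk2 : (1:ℝ) ≤ (k:ℝ) ^ 2 := by nlinarith
    have hπk : 4 * π ^ 2 ≤ 4 * π ^ 2 * (k:ℝ) ^ 2 :=
      le_mul_of_one_le_right (by positivity) hk2
    have hnum : 0 < 4 * π ^ 2 * (k:ℝ) ^ 2 - L ^ 2 := by linarith
    have h3 : 3 / ((2 * π * (k:ℝ) / L) ^ 2 - 1)
        ≤ (3 * L ^ 2 / (4 * π ^ 2 - L ^ 2)) * (1 / (k : ℝ) ^ 2) := by
      rw [hrw, div_div_eq_mul_div, mul_one_div, div_div, div_le_div_iff₀ hnum (by positivity)]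
      nlinarith [mul_nonneg (mul_nonneg (sq_nonneg L) (sq_nonneg L)) (sub_nonneg.mpr hk2)]
    calc Real.log (f k) = 2 * Real.log r := hlog
      _ ≤ 2 * (3 / ((2 * π * k / L) ^ 2 - 1)) := by rw [← h2]; linarith
      _ ≤ (6 * L ^ 2 / (4 * π ^ 2 - L ^ 2)) * (1 / (k : ℝ) ^ 2) := by
          have := h3
          rw [show (6:ℝ) * L ^ 2 / (4 * π ^ 2 - L ^ 2) = 2 * (3 * L ^ 2 / (4 * π ^ 2 - L ^ 2)) by
            ring]
          linarith
  have hlognn : ∀ k : ℕ, k ≠ 0 → 0 ≤ Real.log (f k) := by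
    intro k hk
    apply Real.log_nonneg
    have := hge1 k hk
    simp only [hf, if_neg hk]
    nlinarith
  have hsumlog : Summable fun k : ℕ => Real.log (f k) := by
    rw [← summable_nat_add_iff 1]
    have hbase : Summable fun k : ℕ =>
        (6 * L ^ 2 / (4 * π ^ 2 - L ^ 2)) * (1 / ((k : ℝ) + 1) ^ 2) := by
      have h0 : Summable fun k : ℕ => (1 : ℝ) / (k : ℝ) ^ 2 :=
        summable_one_div_nat_pow.mpr one_lt_two
      have h1 : Summable fun k : ℕ => (1 : ℝ) / ((k + 1 : ℕ) : ℝ) ^ 2 :=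
        ((summable_nat_add_iff 1).mpr h0)
      refine (h1.mul_left (6 * L ^ 2 / (4 * π ^ 2 - L ^ 2))).congr fun k => ?_
      push_cast
      ring
    apply Summable.of_nonneg_of_le _ _ hbase
    · intro k; exact hlognn (k + 1) (Nat.succ_ne_zero k)
    · intro k
      have := hlogle (k + 1) (Nat.succ_ne_zero k)
      push_cast at this ⊢
      exact this
  -- convergence of the product
  have hhasprod : HasProd f (∏' k, f k) := by
    have := (Real.hasProd_of_hasSum_log hpos hsumlog.hasSum).multipliable.hasProd
    exact this
  -- identify the value of the product via Euler products
  set a : ℝ := L / (π * Real.sqrt 2) with ha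
  set b : ℝ := L / (2 * π) with hb
  have hsqrt2 : (Real.sqrt 2) ^ 2 = 2 := Real.sq_sqrt (by norm_num)
  have hsqrt2pos : (0:ℝ) < Real.sqrt 2 := Real.sqrt_pos.mpr (by norm_num)
  have hapos : 0 < a := by positivity
  have hbpos : 0 < b := by positivity
  have hπa : π * a = L / Real.sqrt 2 := by rw [ha]; field_simp
  have hπb : π * b = L / 2 := by rw [hb]; field_simp
  have hsinpos : 0 < Real.sin (L / 2) :=
    Real.sin_pos_of_pos_of_lt_pi (by linarith) (by linarith)
  have hsinhpos : 0 < Real.sinh (L / Real.sqrt 2) := Real.sinh_pos_iff.mpr (by positivity)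
  -- limits of partial products of the two Euler factors
  have hπane : π * a ≠ 0 := by positivity
  have hπbne : π * b ≠ 0 := by positivity
  have hA : Tendsto (fun n : ℕ => ∏ j ∈ Finset.range n, ((1 : ℝ) + a ^ 2 / ((j : ℝ) + 1) ^ 2))
      atTop (𝓝 ((π * a)⁻¹ * Real.sinh (π * a))) := by
    have := (euler_sinh_prod a).const_mul (π * a)⁻¹
    refine this.congr fun n => ?_
    field_simp
  have hB : Tendsto (fun n : ℕ => ∏ j ∈ Finset.range n, ((1 : ℝ) - b ^ 2 / ((j : ℝ) + 1) ^ 2))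
      atTop (𝓝 ((π * b)⁻¹ * Real.sin (π * b))) := by
    have := (Real.tendsto_euler_sin_prod b).const_mul (π * b)⁻¹
    refine this.congr fun n => ?_
    field_simp
  -- rewrite the shifted factors
  have hfactor : ∀ j : ℕ, f (j + 1) =
      (((1 : ℝ) + a ^ 2 / ((j : ℝ) + 1) ^ 2) / ((1 : ℝ) - b ^ 2 / ((j : ℝ) + 1) ^ 2)) ^ 2 := by
    intro j
    have hj0 : (j + 1 : ℕ) ≠ 0 := Nat.succ_ne_zero j
    have hm : ((j + 1 : ℕ) : ℝ) = (j : ℝ) + 1 := by push_cast; ring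
    have hm1 : (1 : ℝ) ≤ (j : ℝ) + 1 := le_add_of_nonneg_left (Nat.cast_nonneg j)
    have hd1 : (0:ℝ) < (2 * π * ((j:ℝ)+1) / L) ^ 2 - 1 := by
      have := hden (j+1) hj0; rwa [hm] at this
    have hb2 : b ^ 2 < 1 := by
      rw [hb, div_pow, div_lt_one (by positivity)]
      nlinarith
    have hd2 : (0:ℝ) < (1 : ℝ) - b ^ 2 / ((j : ℝ) + 1) ^ 2 := by
      have h1 : b ^ 2 / ((j : ℝ) + 1) ^ 2 ≤ b ^ 2 :=
        div_le_self (sq_nonneg b) (by nlinarith)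
      linarith
    simp only [hf, if_neg hj0, hm]
    congr 1
    rw [div_eq_div_iff (ne_of_gt hd1) (ne_of_gt hd2)]
    have ha2 : a ^ 2 = L ^ 2 / (2 * π ^ 2) := by
      rw [ha, div_pow, mul_pow, hsqrt2]; ring
    have hb2' : b ^ 2 = L ^ 2 / (4 * π ^ 2) := by
      rw [hb, div_pow]; ring_nf
    rw [ha2, hb2']
    field_simp
    ring
  -- limit of shifted partial products
  set Sa : ℝ := (π * a)⁻¹ * Real.sinh (π * a) with hSa
  set Sb : ℝ := (π * b)⁻¹ * Real.sin (π * b) with hSb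
  have hSbne : Sb ≠ 0 := by
    rw [hSb, hπb]
    positivity
  have hshift : ∀ n : ℕ, ∏ k ∈ Finset.range (n + 1), f k =
      ((∏ j ∈ Finset.range n, ((1 : ℝ) + a ^ 2 / ((j : ℝ) + 1) ^ 2)) /
        (∏ j ∈ Finset.range n, ((1 : ℝ) - b ^ 2 / ((j : ℝ) + 1) ^ 2))) ^ 2 * 2 := by
    intro n
    rw [Finset.prod_range_succ']
    have h0 : f 0 = 2 := by simp [hf]
    rw [h0, Finset.prod_congr rfl (fun j _ => hfactor j), Finset.prod_pow,
      Finset.prod_div_distrib]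
  have hT2 : Tendsto (fun n : ℕ => ∏ k ∈ Finset.range (n + 1), f k) atTop
      (𝓝 ((Sa / Sb) ^ 2 * 2)) := by
    have := (((hA.div hB hSbne).pow 2).mul_const 2)
    exact this.congr fun n => (hshift n).symm
  have hT1 : Tendsto (fun n : ℕ => ∏ k ∈ Finset.range (n + 1), f k) atTop (𝓝 (∏' k, f k)) :=
    hhasprod.tendsto_prod_nat.comp (tendsto_add_atTop_nat 1)
  have hval : (∏' k, f k) = (Sa / Sb) ^ 2 * 2 := tendsto_nhds_unique hT1 hT2
  -- evaluate the closed form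
  have hfinal : (Sa / Sb) ^ 2 * 2 = (Real.sinh (L / Real.sqrt 2) / Real.sin (L / 2)) ^ 2 := by
    have hsinne : Real.sin (L / 2) ≠ 0 := ne_of_gt hsinpos
    have hs2ne : Real.sqrt 2 ≠ 0 := ne_of_gt hsqrt2pos
    have hS : Sa / Sb = (Real.sqrt 2 / 2) *
        (Real.sinh (L / Real.sqrt 2) / Real.sin (L / 2)) := by
      rw [hSa, hSb, hπa, hπb]
      field_simp
    rw [hS, mul_pow, div_pow, hsqrt2]
    ring
  have hprodval : HasProd f ((Real.sinh (L / Real.sqrt 2) / Real.sin (L / 2)) ^ 2) := by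
    rw [← hfinal, ← hval]; exact hhasprod
  refine ⟨hprodval, ?_⟩
  have htprod : (∏' k, f k) = (Real.sinh (L / Real.sqrt 2) / Real.sin (L / 2)) ^ 2 :=
    hprodval.tprod_eq
  rw [show (∏' k : ℕ, if k = 0 then (2:ℝ) else
      ((2 + (2 * π * k / L) ^ 2) / ((2 * π * k / L) ^ 2 - 1)) ^ 2) = ∏' k, f k from rfl, htprod,
    Real.sqrt_sq (by positivity)]
end

section
/- For every fixed ε > 0, the corrected periodic Kramers prefactor has the finite limit lim_{L → 2π⁻} (1/2π) · (λ₁(L)/(λ₁(L)+√(3ε/(4L)))) · Ψ̃₊(λ₁(L)/√(3ε/(4L))) · sinh(L/√2)/sin(L/2) = sinh(√2 π)/(√3 π) · ε^{−1/2}, where λ₁(L) = −1 + (2π/L)². -/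
open Real Filter Set

/-- The error function `erf(z) = (2/√π)∫₀^z e^{−t²} dt`. -/
noncomputable def erf (z : ℝ) : ℝ :=
  (2 / Real.sqrt π) * ∫ t in (0:ℝ)..z, Real.exp (-t ^ 2)

/-- The universal scaling function
`Ψ̃₊(α) = √(π/8)(1+α)e^{α²/8}[1 + erf(−2^{−3/2}α)]`. -/
noncomputable def PsiTildePlus (α : ℝ) : ℝ :=
  Real.sqrt (π / 8) * (1 + α) * Real.exp (α ^ 2 / 8) *
    (1 + erf (-α / 2 ^ ((3 : ℝ) / 2)))

lemma continuous_erf : Continuous erf := by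
  unfold erf
  exact continuous_const.mul (intervalIntegral.continuous_primitive
    (fun a b => (Continuous.intervalIntegrable (by fun_prop) a b)) 0)

lemma erf_zero : erf 0 = 0 := by simp [erf]

lemma continuous_psi : Continuous PsiTildePlus := by
  unfold PsiTildePlus
  have h := continuous_erf
  fun_prop

lemma psi_zero : PsiTildePlus 0 = Real.sqrt (π / 8) := by
  simp [PsiTildePlus, erf_zero]

/-- For every fixed `ε > 0`, the corrected periodic Kramers prefactor has
the finite limit
`lim_{L → 2π⁻} (1/2π)·(λ₁(L)/(λ₁(L)+√(3ε/(4L))))·Ψ̃₊(λ₁(L)/√(3ε/(4L)))·sinh(L/√2)/sin(L/2)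
  = sinh(√2 π)/(√3 π) · ε^{−1/2}`, where `λ₁(L) = −1 + (2π/L)²`. -/
theorem stmt_15 (ε : ℝ) (hε : 0 < ε) :
    Tendsto (fun L : ℝ =>
        (1 / (2 * π)) *
          ((-1 + (2 * π / L) ^ 2) /
            ((-1 + (2 * π / L) ^ 2) + Real.sqrt (3 * ε / (4 * L)))) *
          PsiTildePlus ((-1 + (2 * π / L) ^ 2) / Real.sqrt (3 * ε / (4 * L))) *
          Real.sinh (L / Real.sqrt 2) / Real.sin (L / 2))
      (nhdsWithin (2 * π) (Iio (2 * π)))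
      (nhds (Real.sinh (Real.sqrt 2 * π) / (Real.sqrt 3 * π) * ε ^ (-(1 : ℝ) / 2))) := by
  have hπ := Real.pi_pos
  set l := nhdsWithin (2 * π) (Iio (2 * π)) with hl
  set lam : ℝ → ℝ := fun L => -1 + (2 * π / L) ^ 2 with hlam
  set s : ℝ → ℝ := fun L => Real.sqrt (3 * ε / (4 * L)) with hsdef
  set s₀ : ℝ := Real.sqrt (3 * ε / (8 * π)) with hs0
  have hs0pos : 0 < s₀ := Real.sqrt_pos.2 (by positivity)
  have hle : l ≤ nhds (2 * π) := nhdsWithin_le_nhds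
  -- λ → 0
  have hlamT : Tendsto lam l (nhds 0) := by
    have : ContinuousAt lam (2 * π) := by
      apply ContinuousAt.add continuousAt_const
      exact (ContinuousAt.div continuousAt_const continuousAt_id (by simp)).pow 2
    have h0 : lam (2 * π) = 0 := by
      simp only [hlam]
      rw [div_self (by positivity)]
      norm_num
    exact h0 ▸ this.tendsto.mono_left hle
  -- s → s₀
  have hsT : Tendsto s l (nhds s₀) := by
    have : ContinuousAt s (2 * π) := by
      apply Real.continuous_sqrt.continuousAt.comp
      exact ContinuousAt.div continuousAt_const (by fun_prop) (by positivity)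
    have h0 : s (2 * π) = s₀ := by
      simp only [hsdef, hs0]
      ring_nf
    exact h0 ▸ this.tendsto.mono_left hle
  -- slope of sin at π
  have hslope : Tendsto (fun L : ℝ => Real.sin (L / 2) / (L / 2 - π)) l (nhds (-1)) := by
    have h1 : Tendsto (slope Real.sin π) (nhdsWithin π {π}ᶜ) (nhds (-1)) := by
      have := Real.hasDerivAt_sin π
      rw [hasDerivAt_iff_tendsto_slope] at this
      simpa using this
    have h2 : Tendsto (fun L : ℝ => L / 2) l (nhdsWithin π {π}ᶜ) := by
      rw [tendsto_nhdsWithin_iff]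
      constructor
      · have : ContinuousAt (fun L : ℝ => L / 2) (2 * π) := by fun_prop
        have h0 : (2 * π) / 2 = π := by ring
        exact h0 ▸ this.tendsto.mono_left hle
      · filter_upwards [self_mem_nhdsWithin] with L hL
        simp only [mem_compl_iff, mem_singleton_iff]
        rw [mem_Iio] at hL
        intro h; linarith
    have := h1.comp h2
    refine this.congr fun L => ?_
    simp [slope_def_field, Real.sin_pi, Function.comp]
  -- D = (L/2-π)/sin(L/2) → -1
  have hD : Tendsto (fun L : ℝ => (L / 2 - π) / Real.sin (L / 2)) l (nhds (-1)) := by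
    have h := hslope.inv₀ (by norm_num)
    have : ((-1 : ℝ))⁻¹ = -1 := by norm_num
    rw [this] at h
    refine h.congr fun L => ?_
    rw [inv_div]
  -- continuous-at-2π part P
  have hPsiT : Tendsto (fun L => PsiTildePlus (lam L / s L)) l (nhds (Real.sqrt (π / 8))) := by
    have h1 : Tendsto (fun L => lam L / s L) l (nhds 0) := by
      have := hlamT.div hsT hs0pos.ne'
      rw [zero_div] at this; exact this
    have := (continuous_psi.continuousAt (x := (0:ℝ))).tendsto.comp h1
    rwa [psi_zero] at this
  have hinvT : Tendsto (fun L => (lam L + s L)⁻¹) l (nhds s₀⁻¹) := by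
    have := (hlamT.add hsT).inv₀ (by simpa using hs0pos.ne')
    simpa using this
  have hsinhT : Tendsto (fun L : ℝ => Real.sinh (L / Real.sqrt 2)) l
      (nhds (Real.sinh (Real.sqrt 2 * π))) := by
    have hc : ContinuousAt (fun L : ℝ => Real.sinh (L / Real.sqrt 2)) (2 * π) := by fun_prop
    have h0 : (2 * π) / Real.sqrt 2 = Real.sqrt 2 * π := by
      rw [eq_comm, eq_div_iff (by positivity)]
      rw [mul_comm (Real.sqrt 2) π, mul_assoc, Real.mul_self_sqrt (by norm_num)]
      ring
    have := hc.tendsto.mono_left hle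
    rwa [h0] at this
  have hrT : Tendsto (fun L : ℝ => -2 * (L + 2 * π) / L ^ 2) l (nhds (-2 / π)) := by
    have hc : ContinuousAt (fun L : ℝ => -2 * (L + 2 * π) / L ^ 2) (2 * π) :=
      ContinuousAt.div (by fun_prop) (by fun_prop) (by positivity)
    have h0 : -2 * (2 * π + 2 * π) / (2 * π) ^ 2 = -2 / π := by
      rw [div_eq_div_iff (by positivity) hπ.ne']
      ring
    have := hc.tendsto.mono_left hle
    rwa [h0] at this
  -- the combined limit
  have hg : Tendsto (fun L : ℝ => (1 / (2 * π)) * (lam L + s L)⁻¹ *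
      PsiTildePlus (lam L / s L) * Real.sinh (L / Real.sqrt 2) *
      (-2 * (L + 2 * π) / L ^ 2) * ((L / 2 - π) / Real.sin (L / 2))) l
      (nhds ((1 / (2 * π)) * s₀⁻¹ * Real.sqrt (π / 8) *
        Real.sinh (Real.sqrt 2 * π) * (-2 / π) * (-1))) :=
    ((((tendsto_const_nhds.mul hinvT).mul hPsiT).mul hsinhT).mul hrT).mul hD
  -- eventual equality with the original function
  have heq : ∀ᶠ L in l, (1 / (2 * π)) * (lam L + s L)⁻¹ *
      PsiTildePlus (lam L / s L) * Real.sinh (L / Real.sqrt 2) *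
      (-2 * (L + 2 * π) / L ^ 2) * ((L / 2 - π) / Real.sin (L / 2)) =
      (1 / (2 * π)) * (lam L / (lam L + s L)) *
      PsiTildePlus (lam L / s L) * Real.sinh (L / Real.sqrt 2) / Real.sin (L / 2) := by
    have hIoi : Ioi (π) ∈ l := by
      apply mem_nhdsWithin_of_mem_nhds
      exact Ioi_mem_nhds (by linarith)
    filter_upwards [hIoi, self_mem_nhdsWithin] with L hL1 hL2
    rw [mem_Ioi] at hL1
    rw [mem_Iio] at hL2
    have hL0 : L ≠ 0 := (lt_trans hπ hL1).ne'
    have key : lam L = (-2 * (L + 2 * π) / L ^ 2) * (L / 2 - π) := by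
      simp only [hlam]
      field_simp
      ring
    rw [key]
    ring
  have hval : (1 / (2 * π)) * s₀⁻¹ * Real.sqrt (π / 8) *
      Real.sinh (Real.sqrt 2 * π) * (-2 / π) * (-1) =
      Real.sinh (Real.sqrt 2 * π) / (Real.sqrt 3 * π) * ε ^ (-(1 : ℝ) / 2) := by
    have h1 : ε ^ (-(1 : ℝ) / 2) = (Real.sqrt ε)⁻¹ := by
      rw [show (-(1:ℝ)/2) = -(1/2) by ring, Real.rpow_neg hε.le, ← Real.sqrt_eq_rpow]
    have h2 : s₀ = Real.sqrt 3 * Real.sqrt ε / (Real.sqrt 8 * Real.sqrt π) := by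
      rw [hs0, Real.sqrt_div (by positivity), Real.sqrt_mul (by norm_num),
        Real.sqrt_mul (by norm_num : (0:ℝ) ≤ 8)]
    have h3 : Real.sqrt (π / 8) = Real.sqrt π / Real.sqrt 8 :=
      Real.sqrt_div hπ.le 8
    have eπ : Real.sqrt π * Real.sqrt π = π := Real.mul_self_sqrt hπ.le
    have n3 : Real.sqrt 3 ≠ 0 := by positivity
    have n8 : Real.sqrt 8 ≠ 0 := by positivity
    have nε : Real.sqrt ε ≠ 0 := by positivity
    have nπ : Real.sqrt π ≠ 0 := by positivity
    rw [h1, h2, h3]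
    field_simp
    ring_nf
    rw [Real.sq_sqrt hπ.le]
    try ring
  rw [← hval]
  exact hg.congr' heq
end
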